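/- Let k be a field of characteristic zero, λ₁, …, λ_n ∈ k elements that are linearly independent over ℚ, and δ the derivation of K = k[x₁^{±1},…,x_n^{±1}] with δ(x_i) = λ_i x_i. Then the only δ-stable ideals of K are 0 and K. -/

import Mathlib

open Finsupp

/-- Let `k` be a field of characteristic zero, `λ₁, …, λ_n ∈ k` linearly independent over
`ℚ`, and `δ` the derivation of the Laurent polynomial ring
`K = k[x₁^{±1}, …, x_n^{±1}]` (the group algebra of `ℤⁿ`) with `δ(x^a) = (∑ aᵢλᵢ)·x^a`
(so `δ(x_i) = λ_i x_i`).  Then the only `δ`-stable ideals of `K` are `0` and `K`. -/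
theorem delta_stable_ideals_trivial
    (k : Type*) [Field k] [CharZero k] (n : ℕ) (lam : Fin n → k)
    (hlam : LinearIndependent ℚ lam)
    (δ : Derivation k (AddMonoidAlgebra k (Fin n → ℤ)) (AddMonoidAlgebra k (Fin n → ℤ)))
    (hδ : ∀ a : Fin n → ℤ,
      δ (AddMonoidAlgebra.single a 1) =
        (∑ i, a i • lam i) • AddMonoidAlgebra.single a 1) :
    ∀ I : Ideal (AddMonoidAlgebra k (Fin n → ℤ)),
      (∀ f ∈ I, δ f ∈ I) → I = ⊥ ∨ I = ⊤ := by
  set A := AddMonoidAlgebra k (Fin n → ℤ) with hA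
  set ε : (Fin n → ℤ) → k := fun a => ∑ i, a i • lam i with hε
  -- injectivity of ε
  have εinj : Function.Injective ε := by
    intro a b hab
    have h0 : ∑ i, (a i - b i) • lam i = 0 := by
      simp only [sub_smul, Finset.sum_sub_distrib]
      rw [show (∑ i, a i • lam i) = ε a from rfl, show (∑ i, b i • lam i) = ε b from rfl,
        hab, sub_self]
    have h1 : ∑ i, ((a i - b i : ℤ) : ℚ) • lam i = 0 := by
      simp_rw [Int.cast_smul_eq_zsmul ℚ]; exact h0
    have h2 := Fintype.linearIndependent_iff.mp hlam (fun i => ((a i - b i : ℤ) : ℚ)) h1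
    funext i
    have h3 : ((a i - b i : ℤ) : ℚ) = 0 := h2 i
    have h4 : (a i - b i : ℤ) = 0 := by exact_mod_cast h3
    omega
  -- coefficient formula for δ
  have hcoeff : ∀ (f : A) (b' : Fin n → ℤ), (δ f).coeff b' = ε b' * f.coeff b' := by
    intro f
    induction f using AddMonoidAlgebra.induction_linear with
    | zero => simp
    | add f g hf hg => intro b'; rw [map_add, AddMonoidAlgebra.coeff_add, Finsupp.add_apply, hf, hg, AddMonoidAlgebra.coeff_add, Finsupp.add_apply, mul_add]
    | single b c =>
      intro b'
      have h1 : (AddMonoidAlgebra.single b c : A) = c • (AddMonoidAlgebra.single b 1 : A) := by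
        apply AddMonoidAlgebra.coeff_injective
        simp [AddMonoidAlgebra.coeff_single, Finsupp.smul_single]
      rw [h1, Derivation.map_smul, hδ]
      simp only [AddMonoidAlgebra.coeff_smul, AddMonoidAlgebra.coeff_single, Finsupp.smul_apply, Finsupp.single_apply, smul_eq_mul]
      by_cases h : b = b'
      · subst h; simp [hε, mul_comm]
      · simp [h]
  intro I hI
  rcases eq_or_ne I ⊥ with h | h
  · exact Or.inl h
  right
  -- a nonzero single in I gives I = ⊤
  have hsingle_top : ∀ (a : Fin n → ℤ) (c : k), c ≠ 0 →
      (AddMonoidAlgebra.single a c : A) ∈ I → I = ⊤ := by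
    intro a c hc hmem
    rw [Ideal.eq_top_iff_one]
    have : (AddMonoidAlgebra.single (-a) c⁻¹ : A) * AddMonoidAlgebra.single a c = 1 := by
      rw [AddMonoidAlgebra.single_mul_single]
      simp [hc, AddMonoidAlgebra.one_def]
    rw [← this]
    exact I.mul_mem_left _ hmem
  -- main induction on support size
  have key : ∀ m : ℕ, ∀ f : A, f ∈ I → f ≠ 0 → f.coeff.support.card = m → I = ⊤ := by
    intro m
    induction m using Nat.strong_induction_on with
    | _ m ih =>
      intro f hfI hf0 hcard
      obtain ⟨a, ha⟩ := Finsupp.support_nonempty_iff.mpr (AddMonoidAlgebra.coeff_eq_zero.not.mpr hf0)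
      by_cases hone : f.coeff.support = {a}
      · obtain ⟨hfa, hfs⟩ := Finsupp.support_eq_singleton.mp hone
        have heq : f = AddMonoidAlgebra.single a (f.coeff a) := AddMonoidAlgebra.coeff_injective hfs
        rw [heq] at hfI
        exact hsingle_top a (f.coeff a) hfa hfI
      · -- support has ≥ 2 elements
        set g : A := δ f - (algebraMap k A (ε a)) * f with hg
        have hgI : g ∈ I := I.sub_mem (hI f hfI) (I.mul_mem_left _ hfI)
        have hgcoeff : ∀ b', g.coeff b' = f.coeff b' * (ε b' - ε a) := by
          intro b'
          have : (algebraMap k A (ε a)) * f = ε a • f := (Algebra.smul_def _ _).symm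
          rw [hg, this, AddMonoidAlgebra.coeff_sub, Finsupp.sub_apply, hcoeff, AddMonoidAlgebra.coeff_smul, Finsupp.smul_apply, smul_eq_mul]
          ring
        have hgsupp : g.coeff.support = f.coeff.support.erase a := by
          ext b'
          simp only [Finsupp.mem_support_iff, Finset.mem_erase, hgcoeff]
          constructor
          · intro hb
            refine ⟨fun hba => ?_, fun hb0 => hb (by simp [hb0])⟩
            subst hba; simp at hb
          · rintro ⟨hba, hb0⟩
            exact mul_ne_zero hb0 (sub_ne_zero.mpr (fun hee => hba (εinj hee)))
        have hg0 : g ≠ 0 := by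
          intro hgz
          apply hone
          have : f.coeff.support.erase a = ∅ := by rw [← hgsupp, hgz]; simp
          have := (Finset.erase_eq_empty_iff _ _).mp this
          rcases this with h1 | h1
          · exact absurd ha (by simp [h1])
          · exact h1
        have hlt : g.coeff.support.card < m := by
          rw [hgsupp, ← hcard]
          exact Finset.card_erase_lt_of_mem ha
        exact ih _ hlt g hgI hg0 rfl
  obtain ⟨f, hfI, hf0⟩ := Submodule.exists_mem_ne_zero_of_ne_bot h
  exact key _ f hfI hf0 rfl
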